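/- Let m ≥ 1 be an integer and let s, r ∈ ℂˣ be generic. Define Ψ⁰_{m,s,r}(z) = s r² q₃^{1−m} · (z − q₃⁻²)(z − q₁⁻¹q₃⁻¹s²) ∏_{i=1}^{m−1}(z − s²r² q₁ⁱ q₃⁻ⁱ) / ∏_{i=0}^{m}(z − q² s²r² q₁ⁱ q₃⁻ⁱ) and Ψ¹_{m,s,r}(z) = s⁻¹ r⁻² q₃^{m} · ∏_{i=0}^{m+1}(z − q₁^{i−1} q₃^{−i} s²r²) / [ (z − q₃⁻¹)(z − q₁⁻¹ s²) ∏_{i=0}^{m−1}(z − q₁^{i+1} q₃^{−i} s²r²) ]. Then, componentwise as rational functions of z (wherever denominators are nonzero), (Ψ⁰_{m,s,r}(z), Ψ¹_{m,s,r}(z)) · ∏_{i=0}^{m} A_{0, q₁ⁱ q₃⁻ⁱ s²r²}(z)⁻¹ · ∏_{i=0}^{m−1} A_{1, q₁^{i+1} q₃^{−i} s²r²}(z)⁻¹ = (Ψ⁰_{m,s,rq⁻¹}(z), Ψ¹_{m,s,rq⁻¹}(z)). -/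

import Mathlib

open RatFunc Finset

noncomputable section

lemma L_ne_zero (a : ℂ) : RatFunc.X - RatFunc.C a ≠ 0 := by
  simp only [ne_eq, sub_eq_zero]
  intro h
  have hx : (Polynomial.X : Polynomial ℂ) = Polynomial.C a := by
    have := congrArg RatFunc.num h
    simpa using this
  exact Polynomial.X_ne_C a hx

lemma factor_lin (c x : ℂ) (hc : c ≠ 0) :
    RatFunc.C c * RatFunc.X - RatFunc.C x
      = RatFunc.C c * (RatFunc.X - RatFunc.C (c⁻¹ * x)) := by
  rw [mul_sub, ← map_mul]
  congr 2
  field_simp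

lemma inv_A00 (q2 x : ℂ) (h2 : q2 ≠ 0) :
    ((RatFunc.C q2 * RatFunc.X - RatFunc.C x) / (RatFunc.X - RatFunc.C (q2 * x)))⁻¹
    = RatFunc.C q2⁻¹ *
        ((RatFunc.X - RatFunc.C (q2 * x)) / (RatFunc.X - RatFunc.C (q2⁻¹ * x))) := by
  rw [inv_div, factor_lin q2 x h2, mul_comm (RatFunc.C q2),
    div_mul_eq_div_div, div_eq_inv_mul, map_inv₀]

lemma inv_A1comp (q1 q3 x : ℂ) (h1 : q1 ≠ 0) (h3 : q3 ≠ 0) :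
    (((RatFunc.C q1 * RatFunc.X - RatFunc.C x) * (RatFunc.C q3 * RatFunc.X - RatFunc.C x)) /
      ((RatFunc.X - RatFunc.C (q1 * x)) * (RatFunc.X - RatFunc.C (q3 * x))))⁻¹
    = RatFunc.C (q1 * q3)⁻¹ *
      (((RatFunc.X - RatFunc.C (q1 * x)) * (RatFunc.X - RatFunc.C (q3 * x))) /
       ((RatFunc.X - RatFunc.C (q1⁻¹ * x)) * (RatFunc.X - RatFunc.C (q3⁻¹ * x)))) := by
  rw [inv_div, factor_lin q1 x h1, factor_lin q3 x h3,
    show RatFunc.C q1 * (RatFunc.X - RatFunc.C (q1⁻¹ * x)) *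
        (RatFunc.C q3 * (RatFunc.X - RatFunc.C (q3⁻¹ * x)))
      = RatFunc.C (q1 * q3) *
        ((RatFunc.X - RatFunc.C (q1⁻¹ * x)) * (RatFunc.X - RatFunc.C (q3⁻¹ * x))) by
      rw [map_mul RatFunc.C q1 q3]; ring,
    mul_comm (RatFunc.C (q1 * q3)), div_mul_eq_div_div, div_eq_inv_mul, map_inv₀]

lemma prod_shift_one (m : ℕ) (hm : 1 ≤ m) (f : ℕ → RatFunc ℂ) :
    ∏ i ∈ range m, f (i + 1) = (∏ i ∈ Ico 1 m, f i) * f m := by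
  have h1 : ∏ i ∈ range m, f (i + 1) = ∏ i ∈ Ico 1 (m + 1), f i := by
    rw [Finset.prod_Ico_eq_prod_range]
    simp [add_comm]
  rw [h1, Finset.prod_Ico_succ_top hm]

lemma prod_split_bot (m : ℕ) (hm : 1 ≤ m) (f : ℕ → RatFunc ℂ) :
    ∏ i ∈ range m, f i = f 0 * ∏ i ∈ Ico 1 m, f i := by
  rw [Finset.range_eq_Ico, Finset.prod_eq_prod_Ico_succ_bot hm]

section
variable {q d s r q1 q2 q3 : ℂ}
lemma core1 (hq : q ≠ 0) (hd : d ≠ 0)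
    (hq1 : q1 = q⁻¹ * d) (hq2 : q2 = q ^ 2) (hq3 : q3 = q⁻¹ * d⁻¹) :
    q1 * q3 = q2⁻¹ := by
  subst hq1 hq2 hq3; field_simp

lemma scI1 (hq : q ≠ 0) (hd : d ≠ 0)
    (hq1 : q1 = q⁻¹ * d) (hq2 : q2 = q ^ 2) (hq3 : q3 = q⁻¹ * d⁻¹) (i : ℕ) :
    q3 * (q1 ^ (i + 1) * q3 ^ (-(i : ℤ)) * s ^ 2 * r ^ 2)
      = q2⁻¹ * (q1 ^ i * q3 ^ (-(i : ℤ)) * s ^ 2 * r ^ 2) := by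
  rw [← core1 hq hd hq1 hq2 hq3, pow_succ]; ring

lemma scI2 (hq : q ≠ 0) (hd : d ≠ 0)
    (hq1 : q1 = q⁻¹ * d) (hq2 : q2 = q ^ 2) (hq3 : q3 = q⁻¹ * d⁻¹) (i : ℕ) :
    q1 * (q1 ^ (i + 1) * q3 ^ (-(i : ℤ)) * s ^ 2 * r ^ 2)
      = q2⁻¹ * (q1 ^ (i + 1) * q3 ^ (-((i + 1 : ℕ) : ℤ)) * s ^ 2 * r ^ 2) := by
  have h3 : q3 ≠ 0 := by rw [hq3]; exact mul_ne_zero (inv_ne_zero hq) (inv_ne_zero hd)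
  rw [← core1 hq hd hq1 hq2 hq3]
  push_cast
  rw [neg_add, zpow_add₀ h3, zpow_neg_one]
  rw [show q1 * q3 * (q1 ^ (i+1) * (q3 ^ (-(i:ℤ)) * q3⁻¹) * s ^ 2 * r ^ 2)
      = (q3 * q3⁻¹) * (q1 * (q1 ^ (i+1) * q3 ^ (-(i:ℤ)) * s ^ 2 * r ^ 2)) by ring,
    mul_inv_cancel₀ h3]
  ring

lemma scI3 (hq : q ≠ 0) (hd : d ≠ 0)
    (hq1 : q1 = q⁻¹ * d) (hq3 : q3 = q⁻¹ * d⁻¹) (i : ℕ) :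
    q1⁻¹ * (q1 ^ (i + 1) * q3 ^ (-(i : ℤ)) * s ^ 2 * r ^ 2)
      = q1 ^ i * q3 ^ (-(i : ℤ)) * s ^ 2 * r ^ 2 := by
  have h1 : q1 ≠ 0 := by rw [hq1]; exact mul_ne_zero (inv_ne_zero hq) hd
  rw [pow_succ, show q1⁻¹ * (q1 ^ i * q1 * q3 ^ (-(i:ℤ)) * s ^ 2 * r ^ 2)
      = (q1⁻¹ * q1) * (q1 ^ i * q3 ^ (-(i:ℤ)) * s ^ 2 * r ^ 2) by ring,
    inv_mul_cancel₀ h1, one_mul]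

lemma scI4 (hq : q ≠ 0) (hd : d ≠ 0)
    (hq3 : q3 = q⁻¹ * d⁻¹) (i : ℕ) :
    q3⁻¹ * (q1 ^ (i + 1) * q3 ^ (-(i : ℤ)) * s ^ 2 * r ^ 2)
      = q1 ^ (i + 1) * q3 ^ (-((i + 1 : ℕ) : ℤ)) * s ^ 2 * r ^ 2 := by
  push_cast
  rw [neg_add, zpow_add₀ (by rw [hq3]; exact mul_ne_zero (inv_ne_zero hq) (inv_ne_zero hd)),
    zpow_neg_one]
  ring

lemma scJ1 (i : ℕ) :
    q1 * (q1 ^ i * q3 ^ (-(i : ℤ)) * s ^ 2 * r ^ 2)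
      = q1 ^ (i + 1) * q3 ^ (-(i : ℤ)) * s ^ 2 * r ^ 2 := by
  rw [pow_succ]; ring

lemma scJ2 (hq : q ≠ 0) (hd : d ≠ 0) (hq1 : q1 = q⁻¹ * d) (i : ℕ) :
    q1⁻¹ * (q1 ^ i * q3 ^ (-(i : ℤ)) * s ^ 2 * r ^ 2)
      = q1 ^ ((i : ℤ) - 1) * q3 ^ (-(i : ℤ)) * s ^ 2 * r ^ 2 := by
  rw [zpow_sub₀ (by rw [hq1]; exact mul_ne_zero (inv_ne_zero hq) hd), zpow_natCast, zpow_one]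
  ring

lemma scJ3 (hq : q ≠ 0) (hd : d ≠ 0) (hq3 : q3 = q⁻¹ * d⁻¹) (i : ℕ) :
    q3⁻¹ * (q1 ^ i * q3 ^ (-(i : ℤ)) * s ^ 2 * r ^ 2)
      = q1 ^ (((i + 1 : ℕ) : ℤ) - 1) * q3 ^ (-((i + 1 : ℕ) : ℤ)) * s ^ 2 * r ^ 2 := by
  have h3 : q3 ≠ 0 := by rw [hq3]; exact mul_ne_zero (inv_ne_zero hq) (inv_ne_zero hd)
  push_cast
  rw [neg_add, zpow_add₀ h3, zpow_neg_one, add_sub_cancel_right, zpow_natCast]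
  ring

lemma scJ4 (hq : q ≠ 0) (hd : d ≠ 0)
    (hq1 : q1 = q⁻¹ * d) (hq2 : q2 = q ^ 2) (hq3 : q3 = q⁻¹ * d⁻¹) (i : ℕ) :
    q2 * (q1 ^ (i + 1) * q3 ^ (-(i : ℤ)) * s ^ 2 * r ^ 2)
      = q1 ^ (((i + 1 : ℕ) : ℤ) - 1) * q3 ^ (-((i + 1 : ℕ) : ℤ)) * s ^ 2 * r ^ 2 := by
  have h3 : q3 ≠ 0 := by rw [hq3]; exact mul_ne_zero (inv_ne_zero hq) (inv_ne_zero hd)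
  push_cast
  rw [neg_add, zpow_add₀ h3, zpow_neg_one, add_sub_cancel_right, zpow_natCast]
  have h13 : q1 * q2 = q3⁻¹ := by subst hq1 hq2 hq3; field_simp
  calc q2 * (q1 ^ (i + 1) * q3 ^ (-(i:ℤ)) * s ^ 2 * r ^ 2)
      = (q1 * q2) * (q1 ^ i * q3 ^ (-(i:ℤ)) * s ^ 2 * r ^ 2) := by rw [pow_succ]; ring
    _ = q1 ^ i * (q3 ^ (-(i:ℤ)) * q3⁻¹) * s ^ 2 * r ^ 2 := by rw [h13]; ring

lemma scJ7 (hq : q ≠ 0) (hd : d ≠ 0) (hq3 : q3 = q⁻¹ * d⁻¹) (m : ℕ) :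
    q3 * (q1 ^ (m + 1) * q3 ^ (-((m + 1 : ℕ) : ℤ)) * s ^ 2 * r ^ 2)
      = q1 ^ (m + 1) * q3 ^ (-(m : ℤ)) * s ^ 2 * r ^ 2 := by
  have h3 : q3 ≠ 0 := by rw [hq3]; exact mul_ne_zero (inv_ne_zero hq) (inv_ne_zero hd)
  push_cast
  rw [neg_add, zpow_add₀ h3, zpow_neg_one]
  rw [show q3 * (q1 ^ (m+1) * (q3 ^ (-(m:ℤ)) * q3⁻¹) * s ^ 2 * r ^ 2)
      = (q3 * q3⁻¹) * (q1 ^ (m+1) * q3 ^ (-(m:ℤ)) * s ^ 2 * r ^ 2) by ring,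
    mul_inv_cancel₀ h3, one_mul]

lemma sc01 (i : ℕ) :
    s ^ 2 * r ^ 2 * q1 ^ i * q3 ^ (-(i : ℤ)) = q1 ^ i * q3 ^ (-(i : ℤ)) * s ^ 2 * r ^ 2 := by
  ring

lemma sc02 (hq2 : q2 = q ^ 2) (i : ℕ) :
    q ^ 2 * s ^ 2 * r ^ 2 * q1 ^ i * q3 ^ (-(i : ℤ))
      = q2 * (q1 ^ i * q3 ^ (-(i : ℤ)) * s ^ 2 * r ^ 2) := by
  rw [hq2]; ring

lemma sc03 (hq : q ≠ 0) (hq2 : q2 = q ^ 2) (i : ℕ) :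
    s ^ 2 * (r * q⁻¹) ^ 2 * q1 ^ i * q3 ^ (-(i : ℤ))
      = q2⁻¹ * (q1 ^ i * q3 ^ (-(i : ℤ)) * s ^ 2 * r ^ 2) := by
  rw [hq2, mul_pow, show (q⁻¹)^2 = (q^2)⁻¹ by rw [← inv_pow]]
  ring

lemma sc04 (hq : q ≠ 0) (i : ℕ) :
    q ^ 2 * s ^ 2 * (r * q⁻¹) ^ 2 * q1 ^ i * q3 ^ (-(i : ℤ))
      = q1 ^ i * q3 ^ (-(i : ℤ)) * s ^ 2 * r ^ 2 := by
  rw [mul_pow, show q ^ 2 * s ^ 2 * (r ^ 2 * q⁻¹ ^ 2) * q1 ^ i * q3 ^ (-(i:ℤ))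
      = (q * q⁻¹) ^ 2 * (q1 ^ i * q3 ^ (-(i:ℤ)) * s ^ 2 * r ^ 2) by ring,
    mul_inv_cancel₀ hq, one_pow, one_mul]

lemma sc05 (hq : q ≠ 0) (hd : d ≠ 0)
    (hq1 : q1 = q⁻¹ * d) (hq2 : q2 = q ^ 2) (hq3 : q3 = q⁻¹ * d⁻¹) (i : ℕ) :
    q1 ^ ((i : ℤ) - 1) * q3 ^ (-(i : ℤ)) * s ^ 2 * (r * q⁻¹) ^ 2
      = q3 * (q1 ^ i * q3 ^ (-(i : ℤ)) * s ^ 2 * r ^ 2) := by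
  have h1 : q1 ≠ 0 := by rw [hq1]; exact mul_ne_zero (inv_ne_zero hq) hd
  rw [zpow_sub₀ h1, zpow_natCast, zpow_one]
  have hrel : q1⁻¹ * q⁻¹ ^ 2 = q3 := by subst hq1 hq2 hq3; field_simp
  rw [← hrel, mul_pow]
  ring

lemma sc06 (hq : q ≠ 0) (hq2 : q2 = q ^ 2) (i : ℕ) :
    q1 ^ (i + 1) * q3 ^ (-(i : ℤ)) * s ^ 2 * (r * q⁻¹) ^ 2
      = q2⁻¹ * (q1 ^ (i + 1) * q3 ^ (-(i : ℤ)) * s ^ 2 * r ^ 2) := by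
  rw [hq2, mul_pow, show (q⁻¹)^2 = (q^2)⁻¹ by rw [← inv_pow]]
  ring

lemma scC0 (hq : q ≠ 0) (hd : d ≠ 0)
    (hq1 : q1 = q⁻¹ * d) (hq2 : q2 = q ^ 2) (hq3 : q3 = q⁻¹ * d⁻¹) (m : ℕ) :
    s * r ^ 2 * q3 ^ (1 - (m : ℤ)) * (q2⁻¹) ^ (m + 1) * ((q1 * q3)⁻¹) ^ m
      = s * (r * q⁻¹) ^ 2 * q3 ^ (1 - (m : ℤ)) := by
  rw [core1 hq hd hq1 hq2 hq3, inv_inv, hq2, pow_succ, mul_pow,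
    show (q⁻¹)^2 = (q^2)⁻¹ by rw [← inv_pow]]
  have h2 : (q ^ 2 : ℂ) ≠ 0 := pow_ne_zero _ hq
  field_simp
  have e : q ^ 2 * q ^ (m * 2) * q⁻¹ ^ 2 * q⁻¹ ^ (m * 2) = 1 := by
    rw [show q ^ 2 * q ^ (m * 2) * q⁻¹ ^ 2 * q⁻¹ ^ (m * 2) = (q * q⁻¹) ^ (2 + m * 2) by ring,
      mul_inv_cancel₀ hq, one_pow]
  linear_combination (s * r ^ 2 * q3 ^ (1 - (m : ℤ))) * e

lemma scC1 (hq : q ≠ 0) (hd : d ≠ 0) (hr : r ≠ 0) (hs : s ≠ 0)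
    (hq1 : q1 = q⁻¹ * d) (hq2 : q2 = q ^ 2) (hq3 : q3 = q⁻¹ * d⁻¹) (m : ℕ) :
    s⁻¹ * r ^ (-2 : ℤ) * q3 ^ (m : ℤ) * ((q1 * q3)⁻¹) ^ (m + 1) * (q2⁻¹) ^ m
      = s⁻¹ * (r * q⁻¹) ^ (-2 : ℤ) * q3 ^ (m : ℤ) := by
  rw [core1 hq hd hq1 hq2 hq3, inv_inv, hq2, pow_succ]
  have hpow : (r * q⁻¹) ^ (-2 : ℤ) = r ^ (-2 : ℤ) * q ^ 2 := by
    rw [mul_zpow, inv_zpow, ← zpow_neg, neg_neg,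
      show ((2:ℤ)) = ((2:ℕ):ℤ) by norm_num, zpow_natCast]
  rw [hpow]
  have h2 : (q ^ 2 : ℂ) ≠ 0 := pow_ne_zero _ hq
  have key : ((q ^ 2 : ℂ)) ^ m * ((q ^ 2 : ℂ)⁻¹) ^ m = 1 := by
    rw [← mul_pow, mul_inv_cancel₀ h2, one_pow]
  linear_combination (s⁻¹ * r ^ (-2 : ℤ) * q3 ^ (m : ℤ) * q ^ 2) * key
end

/-- The pair of rational functions `A_{0,a}(z)`. -/
def rootA0 (q1 q2 q3 a : ℂ) : RatFunc ℂ × RatFunc ℂ :=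
  ((RatFunc.C q2 * RatFunc.X - RatFunc.C a) / (RatFunc.X - RatFunc.C (q2 * a)),
   ((RatFunc.C q1 * RatFunc.X - RatFunc.C a) * (RatFunc.C q3 * RatFunc.X - RatFunc.C a)) /
     ((RatFunc.X - RatFunc.C (q1 * a)) * (RatFunc.X - RatFunc.C (q3 * a))))

/-- The pair of rational functions `A_{1,a}(z)`. -/
def rootA1 (q1 q2 q3 a : ℂ) : RatFunc ℂ × RatFunc ℂ :=
  (((RatFunc.C q1 * RatFunc.X - RatFunc.C a) * (RatFunc.C q3 * RatFunc.X - RatFunc.C a)) /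
     ((RatFunc.X - RatFunc.C (q1 * a)) * (RatFunc.X - RatFunc.C (q3 * a))),
   (RatFunc.C q2 * RatFunc.X - RatFunc.C a) / (RatFunc.X - RatFunc.C (q2 * a)))

/-- The zeroth component `Ψ⁰_{m,s,r}(z)` of the highest ℓ-weight of the slanted
relaxed Verma module, with `s = q^{-μ}`, `r = q^{-ν}`. -/
def slantedPsi0 (q q1 q3 : ℂ) (m : ℕ) (s r : ℂ) : RatFunc ℂ :=
  RatFunc.C (s * r ^ 2 * q3 ^ (1 - (m : ℤ))) *
    ((RatFunc.X - RatFunc.C (q3 ^ (-2 : ℤ))) *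
      (RatFunc.X - RatFunc.C (q1⁻¹ * q3⁻¹ * s ^ 2)) *
      ∏ i ∈ Finset.Ico 1 m,
        (RatFunc.X - RatFunc.C (s ^ 2 * r ^ 2 * q1 ^ i * q3 ^ (-(i : ℤ))))) /
    ∏ i ∈ Finset.range (m + 1),
      (RatFunc.X - RatFunc.C (q ^ 2 * s ^ 2 * r ^ 2 * q1 ^ i * q3 ^ (-(i : ℤ))))

/-- The first component `Ψ¹_{m,s,r}(z)` of the highest ℓ-weight of the slanted
relaxed Verma module, with `s = q^{-μ}`, `r = q^{-ν}`. -/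
def slantedPsi1 (q q1 q3 : ℂ) (m : ℕ) (s r : ℂ) : RatFunc ℂ :=
  RatFunc.C (s⁻¹ * r ^ (-2 : ℤ) * q3 ^ (m : ℤ)) *
    (∏ i ∈ Finset.range (m + 2),
      (RatFunc.X - RatFunc.C (q1 ^ ((i : ℤ) - 1) * q3 ^ (-(i : ℤ)) * s ^ 2 * r ^ 2))) /
    ((RatFunc.X - RatFunc.C q3⁻¹) * (RatFunc.X - RatFunc.C (q1⁻¹ * s ^ 2)) *
      ∏ i ∈ Finset.range m,
        (RatFunc.X - RatFunc.C (q1 ^ (i + 1) * q3 ^ (-(i : ℤ)) * s ^ 2 * r ^ 2)))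
set_option maxHeartbeats 1600000 in
/-- Multiplying the highest ℓ-weight `Ψ(G_{0,m}^{μ,ν})` of the slanted relaxed
Verma module by the ℓ-weights of one full staircase of `m+1` white and `m`
black boxes yields `Ψ(G_{0,m}^{μ,ν+1})`. -/
theorem slanted_relaxed_verma_weight_shift
    (q d : ℂ) (hq : q ≠ 0) (hd : d ≠ 0)
    (q1 q2 q3 : ℂ) (hq1 : q1 = q⁻¹ * d) (hq2 : q2 = q ^ 2) (hq3 : q3 = q⁻¹ * d⁻¹)
    (m : ℕ) (hm : 1 ≤ m) (s r : ℂ) (hs : s ≠ 0) (hr : r ≠ 0)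
    (hgen : ∀ a b c e : ℤ, q ^ a * d ^ b * s ^ c * r ^ e = 1 →
      a = 0 ∧ b = 0 ∧ c = 0 ∧ e = 0) :
    (slantedPsi0 q q1 q3 m s r, slantedPsi1 q q1 q3 m s r) *
        (∏ i ∈ Finset.range (m + 1),
          (rootA0 q1 q2 q3 (q1 ^ i * q3 ^ (-(i : ℤ)) * s ^ 2 * r ^ 2))⁻¹) *
        (∏ i ∈ Finset.range m,
          (rootA1 q1 q2 q3 (q1 ^ (i + 1) * q3 ^ (-(i : ℤ)) * s ^ 2 * r ^ 2))⁻¹)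
      = (slantedPsi0 q q1 q3 m s (r * q⁻¹), slantedPsi1 q q1 q3 m s (r * q⁻¹)) := by
  have hq1' : q1 ≠ 0 := by rw [hq1]; exact mul_ne_zero (inv_ne_zero hq) hd
  have hq2' : q2 ≠ 0 := by rw [hq2]; exact pow_ne_zero _ hq
  have hq3' : q3 ≠ 0 := by rw [hq3]; exact mul_ne_zero (inv_ne_zero hq) (inv_ne_zero hd)
  -- pointwise rewriting facts
  have h00 : ∀ i : ℕ,
      ((RatFunc.C q2 * RatFunc.X - RatFunc.C (q1 ^ i * q3 ^ (-(i:ℤ)) * s ^ 2 * r ^ 2)) /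
        (RatFunc.X - RatFunc.C (q2 * (q1 ^ i * q3 ^ (-(i:ℤ)) * s ^ 2 * r ^ 2))))⁻¹
      = RatFunc.C q2⁻¹ *
        ((RatFunc.X - RatFunc.C (q2 * (q1 ^ i * q3 ^ (-(i:ℤ)) * s ^ 2 * r ^ 2))) /
         (RatFunc.X - RatFunc.C (q2⁻¹ * (q1 ^ i * q3 ^ (-(i:ℤ)) * s ^ 2 * r ^ 2)))) :=
    fun i => inv_A00 q2 _ hq2'
  have h10 : ∀ i : ℕ,
      (((RatFunc.C q1 * RatFunc.X - RatFunc.C (q1 ^ (i+1) * q3 ^ (-(i:ℤ)) * s ^ 2 * r ^ 2)) *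
        (RatFunc.C q3 * RatFunc.X - RatFunc.C (q1 ^ (i+1) * q3 ^ (-(i:ℤ)) * s ^ 2 * r ^ 2))) /
        ((RatFunc.X - RatFunc.C (q1 * (q1 ^ (i+1) * q3 ^ (-(i:ℤ)) * s ^ 2 * r ^ 2))) *
         (RatFunc.X - RatFunc.C (q3 * (q1 ^ (i+1) * q3 ^ (-(i:ℤ)) * s ^ 2 * r ^ 2)))))⁻¹
      = RatFunc.C (q1 * q3)⁻¹ *
        (((RatFunc.X - RatFunc.C (q2⁻¹ * (q1 ^ (i+1) * q3 ^ (-((i+1:ℕ):ℤ)) * s ^ 2 * r ^ 2))) *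
          (RatFunc.X - RatFunc.C (q2⁻¹ * (q1 ^ i * q3 ^ (-(i:ℤ)) * s ^ 2 * r ^ 2)))) /
         ((RatFunc.X - RatFunc.C (q1 ^ i * q3 ^ (-(i:ℤ)) * s ^ 2 * r ^ 2)) *
          (RatFunc.X - RatFunc.C (q1 ^ (i+1) * q3 ^ (-((i+1:ℕ):ℤ)) * s ^ 2 * r ^ 2)))) := by
    intro i
    rw [inv_A1comp q1 q3 _ hq1' hq3', scI2 hq hd hq1 hq2 hq3 i, scI1 hq hd hq1 hq2 hq3 i,
      scI3 hq hd hq1 hq3 i, scI4 hq hd hq3 i]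
  have hb1 : ∀ i : ℕ, s ^ 2 * r ^ 2 * q1 ^ i * q3 ^ (-(i:ℤ))
      = q1 ^ i * q3 ^ (-(i:ℤ)) * s ^ 2 * r ^ 2 := fun i => sc01 i
  have hb2 : ∀ i : ℕ, q ^ 2 * s ^ 2 * r ^ 2 * q1 ^ i * q3 ^ (-(i:ℤ))
      = q2 * (q1 ^ i * q3 ^ (-(i:ℤ)) * s ^ 2 * r ^ 2) := fun i => sc02 hq2 i
  have hb3 : ∀ i : ℕ, s ^ 2 * (r * q⁻¹) ^ 2 * q1 ^ i * q3 ^ (-(i:ℤ))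
      = q2⁻¹ * (q1 ^ i * q3 ^ (-(i:ℤ)) * s ^ 2 * r ^ 2) := fun i => sc03 hq hq2 i
  have hb4 : ∀ i : ℕ, q ^ 2 * s ^ 2 * (r * q⁻¹) ^ 2 * q1 ^ i * q3 ^ (-(i:ℤ))
      = q1 ^ i * q3 ^ (-(i:ℤ)) * s ^ 2 * r ^ 2 := fun i => sc04 hq i
  refine Prod.ext ?_ ?_
  · -- first component
    simp only [Prod.fst_mul, Prod.fst_prod, Prod.fst_inv, rootA0, rootA1, slantedPsi0]
    simp only [h00, h10, hb1, hb2, hb3, hb4]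
    simp only [Finset.prod_mul_distrib, Finset.prod_div_distrib, Finset.prod_const,
      Finset.card_range]
    rw [prod_shift_one m hm (fun j => RatFunc.X -
          RatFunc.C (q2⁻¹ * (q1 ^ j * q3 ^ (-(j:ℤ)) * s ^ 2 * r ^ 2))),
        prod_shift_one m hm (fun j => RatFunc.X -
          RatFunc.C (q1 ^ j * q3 ^ (-(j:ℤ)) * s ^ 2 * r ^ 2)),
        prod_split_bot m hm (fun j => RatFunc.X -
          RatFunc.C (q2⁻¹ * (q1 ^ j * q3 ^ (-(j:ℤ)) * s ^ 2 * r ^ 2))),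
        prod_split_bot m hm (fun j => RatFunc.X -
          RatFunc.C (q1 ^ j * q3 ^ (-(j:ℤ)) * s ^ 2 * r ^ 2)),
        Finset.prod_range_succ (fun j => RatFunc.X -
          RatFunc.C (q1 ^ j * q3 ^ (-(j:ℤ)) * s ^ 2 * r ^ 2)) m,
        prod_split_bot m hm (fun j => RatFunc.X -
          RatFunc.C (q1 ^ j * q3 ^ (-(j:ℤ)) * s ^ 2 * r ^ 2))]
    have hK : RatFunc.C (s * r ^ 2 * q3 ^ (1 - (m:ℤ))) * (RatFunc.C q2⁻¹) ^ (m+1) *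
        (RatFunc.C (q1 * q3)⁻¹) ^ m = RatFunc.C (s * (r * q⁻¹) ^ 2 * q3 ^ (1 - (m:ℤ))) := by
      rw [← map_pow, ← map_pow, ← map_mul, ← map_mul]
      exact congrArg RatFunc.C (scC0 hq hd hq1 hq2 hq3 m)
    rw [← hK]
    -- extra split of the denominator product of white boxes
    rw [Finset.prod_range_succ (fun j => RatFunc.X -
          RatFunc.C (q2⁻¹ * (q1 ^ j * q3 ^ (-(j:ℤ)) * s ^ 2 * r ^ 2))) m,
        prod_split_bot m hm (fun j => RatFunc.X -
          RatFunc.C (q2⁻¹ * (q1 ^ j * q3 ^ (-(j:ℤ)) * s ^ 2 * r ^ 2)))]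
    have hW : (∏ x ∈ Finset.range (m+1),
        (RatFunc.X - RatFunc.C (q2 * (q1 ^ x * q3 ^ (-(x:ℤ)) * s ^ 2 * r ^ 2)))) ≠ 0 :=
      Finset.prod_ne_zero_iff.mpr fun i _ => L_ne_zero _
    have hTu : (∏ x ∈ Finset.Ico 1 m,
        (RatFunc.X - RatFunc.C (q1 ^ x * q3 ^ (-(x:ℤ)) * s ^ 2 * r ^ 2))) ≠ 0 :=
      Finset.prod_ne_zero_iff.mpr fun i _ => L_ne_zero _
    have hTv : (∏ x ∈ Finset.Ico 1 m,
        (RatFunc.X - RatFunc.C (q2⁻¹ * (q1 ^ x * q3 ^ (-(x:ℤ)) * s ^ 2 * r ^ 2)))) ≠ 0 :=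
      Finset.prod_ne_zero_iff.mpr fun i _ => L_ne_zero _
    have hu0 : (RatFunc.X - RatFunc.C (q1 ^ (0:ℕ) * q3 ^ (-((0:ℕ):ℤ)) * s ^ 2 * r ^ 2)) ≠ 0 :=
      L_ne_zero _
    have hum : (RatFunc.X - RatFunc.C (q1 ^ m * q3 ^ (-(m:ℤ)) * s ^ 2 * r ^ 2)) ≠ 0 :=
      L_ne_zero _
    have hv0 : (RatFunc.X - RatFunc.C (q2⁻¹ * (q1 ^ (0:ℕ) * q3 ^ (-((0:ℕ):ℤ)) * s ^ 2 * r ^ 2))) ≠ 0 :=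
      L_ne_zero _
    have hvm : (RatFunc.X - RatFunc.C (q2⁻¹ * (q1 ^ m * q3 ^ (-(m:ℤ)) * s ^ 2 * r ^ 2))) ≠ 0 :=
      L_ne_zero _
    set W := ∏ x ∈ Finset.range (m+1),
        (RatFunc.X - RatFunc.C (q2 * (q1 ^ x * q3 ^ (-(x:ℤ)) * s ^ 2 * r ^ 2))) with hWdef
    set Tu := ∏ x ∈ Finset.Ico 1 m,
        (RatFunc.X - RatFunc.C (q1 ^ x * q3 ^ (-(x:ℤ)) * s ^ 2 * r ^ 2)) with hTudef
    set Tv := ∏ x ∈ Finset.Ico 1 m,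
        (RatFunc.X - RatFunc.C (q2⁻¹ * (q1 ^ x * q3 ^ (-(x:ℤ)) * s ^ 2 * r ^ 2))) with hTvdef
    set u0 := RatFunc.X - RatFunc.C (q1 ^ (0:ℕ) * q3 ^ (-((0:ℕ):ℤ)) * s ^ 2 * r ^ 2) with hu0def
    set um := RatFunc.X - RatFunc.C (q1 ^ m * q3 ^ (-(m:ℤ)) * s ^ 2 * r ^ 2) with humdef
    set v0 := RatFunc.X - RatFunc.C (q2⁻¹ * (q1 ^ (0:ℕ) * q3 ^ (-((0:ℕ):ℤ)) * s ^ 2 * r ^ 2))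
      with hv0def
    set vm := RatFunc.X - RatFunc.C (q2⁻¹ * (q1 ^ m * q3 ^ (-(m:ℤ)) * s ^ 2 * r ^ 2)) with hvmdef
    set F1 := RatFunc.X - RatFunc.C (q3 ^ (-2:ℤ)) with hF1def
    set F2 := RatFunc.X - RatFunc.C (q1⁻¹ * q3⁻¹ * s ^ 2) with hF2def
    simp only [mul_div_assoc', div_mul_div_comm, div_mul_eq_mul_div, div_div]
    rw [div_eq_div_iff
      (by simp [mul_eq_zero, hW, hTu, hTv, hu0, hum, hv0, hvm])
      (by simp [mul_eq_zero, hW, hTu, hTv, hu0, hum, hv0, hvm])]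
    ring

  · -- second component
    have h01 : ∀ i : ℕ,
        (((RatFunc.C q1 * RatFunc.X - RatFunc.C (q1 ^ i * q3 ^ (-(i:ℤ)) * s ^ 2 * r ^ 2)) *
          (RatFunc.C q3 * RatFunc.X - RatFunc.C (q1 ^ i * q3 ^ (-(i:ℤ)) * s ^ 2 * r ^ 2))) /
          ((RatFunc.X - RatFunc.C (q1 * (q1 ^ i * q3 ^ (-(i:ℤ)) * s ^ 2 * r ^ 2))) *
           (RatFunc.X - RatFunc.C (q3 * (q1 ^ i * q3 ^ (-(i:ℤ)) * s ^ 2 * r ^ 2)))))⁻¹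
        = RatFunc.C (q1 * q3)⁻¹ *
          (((RatFunc.X - RatFunc.C (q1 ^ (i+1) * q3 ^ (-(i:ℤ)) * s ^ 2 * r ^ 2)) *
            (RatFunc.X - RatFunc.C (q3 * (q1 ^ i * q3 ^ (-(i:ℤ)) * s ^ 2 * r ^ 2)))) /
           ((RatFunc.X - RatFunc.C (q1 ^ ((i:ℤ) - 1) * q3 ^ (-(i:ℤ)) * s ^ 2 * r ^ 2)) *
            (RatFunc.X - RatFunc.C (q1 ^ (((i+1:ℕ):ℤ) - 1) * q3 ^ (-((i+1:ℕ):ℤ)) * s ^ 2 * r ^ 2)))) := by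
      intro i
      rw [inv_A1comp q1 q3 _ hq1' hq3', scJ1 i, scJ2 hq hd hq1 i, scJ3 hq hd hq3 i]
    have h11 : ∀ i : ℕ,
        ((RatFunc.C q2 * RatFunc.X - RatFunc.C (q1 ^ (i+1) * q3 ^ (-(i:ℤ)) * s ^ 2 * r ^ 2)) /
          (RatFunc.X - RatFunc.C (q2 * (q1 ^ (i+1) * q3 ^ (-(i:ℤ)) * s ^ 2 * r ^ 2))))⁻¹
        = RatFunc.C q2⁻¹ *
          ((RatFunc.X - RatFunc.C (q1 ^ (((i+1:ℕ):ℤ) - 1) * q3 ^ (-((i+1:ℕ):ℤ)) * s ^ 2 * r ^ 2)) /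
           (RatFunc.X - RatFunc.C (q2⁻¹ * (q1 ^ (i+1) * q3 ^ (-(i:ℤ)) * s ^ 2 * r ^ 2)))) := by
      intro i
      rw [inv_A00 q2 _ hq2', scJ4 hq hd hq1 hq2 hq3 i]
    have hb5 : ∀ i : ℕ, q1 ^ ((i:ℤ) - 1) * q3 ^ (-(i:ℤ)) * s ^ 2 * (r * q⁻¹) ^ 2
        = q3 * (q1 ^ i * q3 ^ (-(i:ℤ)) * s ^ 2 * r ^ 2) := fun i => sc05 hq hd hq1 hq2 hq3 i
    have hb6 : ∀ i : ℕ, q1 ^ (i + 1) * q3 ^ (-(i:ℤ)) * s ^ 2 * (r * q⁻¹) ^ 2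
        = q2⁻¹ * (q1 ^ (i + 1) * q3 ^ (-(i:ℤ)) * s ^ 2 * r ^ 2) := fun i => sc06 hq hq2 i
    have hJ7 : (RatFunc.X - RatFunc.C (q3 * (q1 ^ (m+1) * q3 ^ (-((m+1:ℕ):ℤ)) * s ^ 2 * r ^ 2)))
        = RatFunc.X - RatFunc.C (q1 ^ (m+1) * q3 ^ (-(m:ℤ)) * s ^ 2 * r ^ 2) := by
      rw [scJ7 hq hd hq3 m]
    have hK1 : RatFunc.C (s⁻¹ * r ^ (-2:ℤ) * q3 ^ (m:ℤ)) * (RatFunc.C (q1 * q3)⁻¹) ^ (m+1) *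
        (RatFunc.C q2⁻¹) ^ m = RatFunc.C (s⁻¹ * (r * q⁻¹) ^ (-2:ℤ) * q3 ^ (m:ℤ)) := by
      rw [← map_pow, ← map_pow, ← map_mul, ← map_mul]
      exact congrArg RatFunc.C (scC1 hq hd hr hs hq1 hq2 hq3 m)
    simp only [Prod.snd_mul, Prod.snd_prod, Prod.snd_inv, rootA0, rootA1, slantedPsi1]
    simp only [h01, h11, hb5, hb6]
    simp only [Finset.prod_mul_distrib, Finset.prod_div_distrib, Finset.prod_const,
      Finset.card_range]
    simp only [Finset.prod_range_succ]
    simp only [prod_shift_one m hm (fun j => RatFunc.X -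
        RatFunc.C (q1 ^ ((j:ℤ) - 1) * q3 ^ (-(j:ℤ)) * s ^ 2 * r ^ 2)),
      prod_split_bot m hm (fun j => RatFunc.X -
        RatFunc.C (q1 ^ ((j:ℤ) - 1) * q3 ^ (-(j:ℤ)) * s ^ 2 * r ^ 2))]
    rw [hJ7, ← hK1]
    have hPb : (∏ x ∈ Finset.range m,
        (RatFunc.X - RatFunc.C (q1 ^ (x+1) * q3 ^ (-(x:ℤ)) * s ^ 2 * r ^ 2))) ≠ 0 :=
      Finset.prod_ne_zero_iff.mpr fun i _ => L_ne_zero _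
    have hPh : (∏ x ∈ Finset.range m,
        (RatFunc.X - RatFunc.C (q2⁻¹ * (q1 ^ (x+1) * q3 ^ (-(x:ℤ)) * s ^ 2 * r ^ 2)))) ≠ 0 :=
      Finset.prod_ne_zero_iff.mpr fun i _ => L_ne_zero _
    have hPg : (∏ x ∈ Finset.range m,
        (RatFunc.X - RatFunc.C (q3 * (q1 ^ x * q3 ^ (-(x:ℤ)) * s ^ 2 * r ^ 2)))) ≠ 0 :=
      Finset.prod_ne_zero_iff.mpr fun i _ => L_ne_zero _
    have hTN : (∏ x ∈ Finset.Ico 1 m,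
        (RatFunc.X - RatFunc.C (q1 ^ ((x:ℤ) - 1) * q3 ^ (-(x:ℤ)) * s ^ 2 * r ^ 2))) ≠ 0 :=
      Finset.prod_ne_zero_iff.mpr fun i _ => L_ne_zero _
    simp only [mul_div_assoc', div_mul_div_comm, div_mul_eq_mul_div, div_div]
    rw [div_eq_div_iff
      (by repeat' apply mul_ne_zero
          all_goals first
            | exact L_ne_zero _
            | exact Finset.prod_ne_zero_iff.mpr fun i _ => L_ne_zero _)
      (by repeat' apply mul_ne_zero
          all_goals first
            | exact L_ne_zero _
            | exact Finset.prod_ne_zero_iff.mpr fun i _ => L_ne_zero _)]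
    ring
end
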